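/- Let E : C → D and F : D → C be exact biadjoint functors between module categories of finite-dimensional algebras, ζ = ε ∘ η : 1_C ⇒ 1_C the natural endotransformation from the biadjunction, and B a block of C. If ζ_L ≠ 0 for some simple module L in B, then ζ_M is an isomorphism for every indecomposable M in B, and hence M is a direct summand of FE(M) for every module M in B. -/

import Mathlib

open CategoryTheory Limits

/-- `z` is a primitive central idempotent of `A` (so `zA` is an indecomposable
two-sided ideal direct factor of `A`, i.e. a block). -/
def IsPrimitiveCentralIdempotent {A : Type} [Ring A] (z : A) : Prop :=
  z ∈ Set.center A ∧ IsIdempotentElem z ∧ z ≠ 0 ∧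
    ¬∃ z₁ z₂ : A, z₁ ∈ Set.center A ∧ z₂ ∈ Set.center A ∧
      IsIdempotentElem z₁ ∧ IsIdempotentElem z₂ ∧ z₁ ≠ 0 ∧ z₂ ≠ 0 ∧
      z₁ * z₂ = 0 ∧ z = z₁ + z₂

/-- Let `E : A-mod ⥤ B-mod` and `F : B-mod ⥤ A-mod` be exact biadjoint
functors between module categories of finite-dimensional `k`-algebras, and let
`ζ_X = ε_X ∘ η_X` be the natural endotransformation of the identity coming from the
biadjunction. Let `z` be a primitive central idempotent of `A` (a block `B` of `A`-mod,
a module `M` lying in `B` iff `z` acts on it as the identity). If `ζ_L ≠ 0` for some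
simple `L` in the block, then `ζ_M` is an isomorphism for every (nonzero, finitely
generated) indecomposable `M` in the block, and every finitely generated module `M` in
the block is a direct summand of `FE(M)`. -/
theorem stmt_18 {k A B : Type} [Field k] [Ring A] [Algebra k A] [FiniteDimensional k A]
    [Ring B] [Algebra k B] [FiniteDimensional k B]
    (E : ModuleCat A ⥤ ModuleCat B) (F : ModuleCat B ⥤ ModuleCat A)
    [PreservesFiniteLimits E] [PreservesFiniteColimits E]
    [PreservesFiniteLimits F] [PreservesFiniteColimits F]
    (adj₁ : E ⊣ F) (adj₂ : F ⊣ E)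
    (z : A) (hz : IsPrimitiveCentralIdempotent z)
    (L : ModuleCat A) (hLsimple : IsSimpleModule A L)
    (hLblock : ∀ x : L, z • x = x)
    (hζL : adj₁.unit.app L ≫ adj₂.counit.app L ≠ 0) :
    (∀ M : ModuleCat A, Module.Finite A M → Nontrivial M →
      (∀ x : M, z • x = x) →
      (∀ N P : Submodule A M, IsCompl N P → N = ⊤ ∨ P = ⊤) →
      IsIso (adj₁.unit.app M ≫ adj₂.counit.app M)) ∧
    (∀ M : ModuleCat A, Module.Finite A M → (∀ x : M, z • x = x) →
      ∃ (ι : M ⟶ F.obj (E.obj M)) (π : F.obj (E.obj M) ⟶ M), ι ≫ π = 𝟙 M) := by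
  classical
  -- the natural endotransformation ζ of the identity functor
  let ζ : 𝟭 (ModuleCat A) ⟶ 𝟭 (ModuleCat A) := adj₁.unit ≫ adj₂.counit
  have hζapp : ∀ M : ModuleCat A, ζ.app M = adj₁.unit.app M ≫ adj₂.counit.app M :=
    fun M => rfl
  -- the central element representing ζ
  let AU : ModuleCat A := ModuleCat.of A (ULift A)
  set c : A := (ζ.app AU (ULift.up (1 : A))).down with hc_def
  have hsmul : ∀ (M : ModuleCat A) (x : M), ζ.app M x = c • x := by
    intro M x
    have h := ζ.naturality (show AU ⟶ M from ModuleCat.ofHom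
      ((LinearMap.toSpanSingleton A M x) ∘ₗ (ULift.moduleEquiv : ULift A ≃ₗ[A] A).toLinearMap))
    simp only [Functor.id_obj, Functor.id_map] at h
    have h2 : ζ.app M ((1:A) • x) = (ζ.app AU (ULift.up (1 : A))).down • x :=
      congrArg (fun (g : AU ⟶ M) => ConcreteCategory.hom g (ULift.up (1 : A))) h
    rwa [one_smul] at h2
  -- c commutes with everything
  have hc : ∀ a : A, a * c = c * a := by
    intro a
    have h2 : ζ.app AU ((a : A) • (ULift.up (1 : A))) = a • ζ.app AU (ULift.up (1 : A)) :=
      map_smul _ a _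
    have h1 := hsmul AU ((a : A) • (ULift.up (1 : A)))
    rw [h2] at h1
    have h4 : a • c = c • (a • (1:A)) := congrArg ULift.down h1
    simpa [smul_eq_mul] using h4
  have hzc : ∀ a : A, a * z = z * a := fun a => (Semigroup.mem_center_iff.mp hz.1) a
  -- move into the center of A
  set z' : Subalgebra.center k A := ⟨z, Subalgebra.mem_center_iff.mpr hzc⟩ with hz'_def
  set c' : Subalgebra.center k A := ⟨c, Subalgebra.mem_center_iff.mpr hc⟩ with hc'_def
  set u' : Subalgebra.center k A := z' * c' with hu'_def
  have hz'id : z' * z' = z' := Subtype.ext hz.2.1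
  have hu'z : u' * z' = u' := by
    rw [hu'_def]
    calc z' * c' * z' = (z' * z') * c' := by ring
      _ = z' * c' := by rw [hz'id]
  -- stabilization of the chain (u'^n) via Artinianity of the center
  let V : ℕ → Submodule k (Subalgebra.center k A) :=
    fun n => LinearMap.range (LinearMap.mulLeft k (u' ^ n))
  have hanti : ∀ m, V (m + 1) ≤ V m := by
    intro m y hy
    obtain ⟨x, hx⟩ := hy
    exact ⟨u' * x, by rw [LinearMap.mulLeft_apply] at hx ⊢; rw [← hx]; ring⟩
  have hantitone : Antitone V := antitone_nat_of_succ_le hanti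
  obtain ⟨N, hN⟩ := IsArtinian.monotone_stabilizes
    (⟨fun m => OrderDual.toDual (V m), fun m m' h => hantitone h⟩ : ℕ →o (Submodule k (Subalgebra.center k A))ᵒᵈ)
  have hVN : V (N + 1) = V (N + 2) := by
    have a1 := hN (N + 1) (by omega)
    have a2 := hN (N + 2) (by omega)
    exact (OrderDual.toDual_inj.mp a1).symm.trans (OrderDual.toDual_inj.mp a2)
  -- extract w with u'^(N+2) * w = u'^(N+1)
  have hmem : u' ^ (N + 1) ∈ V (N + 2) := by
    rw [← hVN]; exact ⟨1, mul_one _⟩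
  obtain ⟨w, hw⟩ := hmem
  rw [LinearMap.mulLeft_apply] at hw
  -- hw : u'^(N+2) * w = u'^(N+1)
  have hstep : ∀ j : ℕ, u' ^ (N + 1 + j) * w ^ j = u' ^ (N + 1) := by
    intro j
    induction j with
    | zero => simp
    | succ j ih =>
      calc u' ^ (N + 1 + (j + 1)) * w ^ (j + 1)
          = (u' ^ (N + 2) * w) * (u' ^ j * w ^ j) := by ring
        _ = u' ^ (N + 1) * (u' ^ j * w ^ j) := by rw [hw]
        _ = u' ^ (N + 1 + j) * w ^ j := by ring
        _ = u' ^ (N + 1) := ih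
  set e : Subalgebra.center k A := u' ^ (N+1) * w ^ (N+1) with he_def
  have hstepn : u' ^ ((N+1) + (N+1)) * w ^ (N+1) = u' ^ (N+1) := hstep (N+1)
  have he : e * e = e := by
    calc e * e = (u' ^ ((N+1) + (N+1)) * w ^ (N+1)) * w ^ (N+1) := by rw [he_def]; ring
      _ = u' ^ (N+1) * w ^ (N+1) := by rw [hstepn]
      _ = e := he_def.symm
  have hue : u' ^ (N+1) * e = u' ^ (N+1) := by
    calc u' ^ (N+1) * e = u' ^ ((N+1) + (N+1)) * w ^ (N+1) := by rw [he_def]; ring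
      _ = u' ^ (N+1) := hstepn
  have hu'nz : u' ^ (N+1) * z' = u' ^ (N+1) := by
    have h1 : u' ^ (N+1) = u' ^ N * u' := by ring
    rw [h1, mul_assoc, hu'z]
  have hez : e * z' = e := by
    calc e * z' = (u' ^ (N+1) * z') * w ^ (N+1) := by rw [he_def]; ring
      _ = u' ^ (N+1) * w ^ (N+1) := by rw [hu'nz]
      _ = e := he_def.symm
  -- back in A
  have hecomm : ∀ a : A, a * (e : A) = (e : A) * a := Subalgebra.mem_center_iff.mp e.2
  have heA : (e : A) * (e : A) = (e : A) := by
    have h := congrArg Subtype.val he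
    rw [MulMemClass.coe_mul] at h
    exact h
  have hezA : (e : A) * z = (e : A) := by
    have h := congrArg Subtype.val hez
    rw [MulMemClass.coe_mul] at h
    exact h
  have hzeA : z * (e : A) = (e : A) := by rw [hecomm z]; exact hezA
  -- primitivity: e = 0 or e = z
  have hcase : (e : A) = 0 ∨ (e : A) = z := by
    by_contra hcon
    push_neg at hcon
    obtain ⟨h0, hz0⟩ := hcon
    apply hz.2.2.2
    refine ⟨(e : A), z - (e : A), Semigroup.mem_center_iff.mpr hecomm,
      Semigroup.mem_center_iff.mpr (fun g => by rw [mul_sub, sub_mul, hecomm g, hzc g]),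
      heA, ?_, h0, sub_ne_zero_of_ne (Ne.symm hz0), ?_, by abel⟩
    · show (z - (e : A)) * (z - (e : A)) = z - (e : A)
      have expand : (z - (e : A)) * (z - (e : A))
          = z * z - z * (e : A) - ((e : A) * z - (e : A) * (e : A)) := by
        rw [sub_mul, mul_sub, mul_sub]
      rw [expand, hz.2.1, hzeA, hezA, heA]
      abel
    · show (e : A) * (z - (e : A)) = 0
      rw [mul_sub, hezA, heA, sub_self]
  -- a nonzero element of L on which ζ acts nontrivially
  haveI : IsSimpleOrder (Submodule A L) := hLsimple.toIsSimpleOrder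
  haveI : IsSimpleOrder (Submodule A ((𝟭 (ModuleCat A)).obj L)) := hLsimple.toIsSimpleOrder
  have hexists : ∃ x : L, ζ.app L x ≠ 0 := by
    by_contra hcon
    push_neg at hcon
    exact hζL (by ext x; exact hcon x)
  obtain ⟨x₀, hx₀⟩ := hexists
  have hinj : Function.Injective (ζ.app L) := by
    rcases eq_bot_or_eq_top (LinearMap.ker (ζ.app L).hom) with hk | hk
    · exact LinearMap.ker_eq_bot.mp hk
    · exact absurd (show ζ.app L x₀ = 0 from by
        have : x₀ ∈ LinearMap.ker (ζ.app L).hom := hk ▸ Submodule.mem_top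
        exact this) hx₀
  have hx₀ne : x₀ ≠ 0 := fun h => hx₀ (by rw [h, map_zero])
  -- iterated action of u = z*c on L is nonzero
  have hu_act : ∀ y : L, (z * c) • y = ζ.app L y := by
    intro y
    rw [mul_smul, hsmul L y, hLblock (c • y)]
  have hpow : ∀ m : ℕ, ((z * c) ^ m) • x₀ ≠ 0 := by
    intro m
    induction m with
    | zero => simpa using hx₀ne
    | succ m ih =>
      rw [pow_succ', mul_smul, hu_act]
      intro hcon
      exact ih (hinj (by rw [hcon, map_zero]))
  -- rule out e = 0
  have hcoe_pow : ((u' ^ (N+1) : Subalgebra.center k A) : A) = (z * c) ^ (N+1) := by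
    push_cast [hu'_def, hz'_def, hc'_def]
    rfl
  have hez' : (e : A) = z := by
    rcases hcase with h0 | hzz
    · exfalso
      have he0 : e = 0 := Subtype.ext (by simpa using h0)
      have h1 : u' ^ (N+1) = 0 := by rw [← hue, he0, mul_zero]
      have hzcn : (z * c) ^ (N+1) = 0 := by
        rw [← hcoe_pow, h1]; rfl
      exact hpow (N+1) (by rw [hzcn, zero_smul])
    · exact hzz
  -- construct the inverse central element r with c * r = r * c = z
  have heqz : e = z' := Subtype.ext hez'
  set v' : Subalgebra.center k A := u' ^ N * w ^ (N+1) * z' with hv'_def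
  have hcv : c' * v' = z' := by
    have h1 : c' * v' = u' ^ (N+1) * w ^ (N+1) := by rw [hv'_def, hu'_def]; ring
    rw [h1, ← he_def, heqz]
  set r : A := (v' : A) with hr_def
  have hcrA : c * r = z := by
    have := congrArg Subtype.val hcv
    push_cast at this
    exact this
  have hrcA : r * c = z := by
    have : v' * c' = z' := by rw [mul_comm]; exact hcv
    have h2 := congrArg Subtype.val this
    push_cast at h2
    exact h2
  have hrcomm : ∀ a : A, a * r = r * a := Subalgebra.mem_center_iff.mp v'.2
  -- the key: a two-sided inverse of ζ_M for every M in the block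
  have key : ∀ M : ModuleCat A, (∀ x : M, z • x = x) →
      ∃ g : M ⟶ M, (adj₁.unit.app M ≫ adj₂.counit.app M) ≫ g = 𝟙 M ∧
        g ≫ (adj₁.unit.app M ≫ adj₂.counit.app M) = 𝟙 M := by
    intro M hMblock
    refine ⟨ModuleCat.ofHom ({ toFun := fun x => r • x,
                               map_add' := fun x y => smul_add r x y,
                               map_smul' := fun a x => by
                                 simp only [RingHom.id_apply]
                                 rw [smul_smul, smul_smul, hrcomm a] } : M →ₗ[A] M), ?_, ?_⟩
    · apply ModuleCat.hom_ext
      apply LinearMap.ext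
      intro x
      show r • ((ζ.app M) x) = x
      rw [hsmul M x, smul_smul, hrcA]
      exact hMblock x
    · apply ModuleCat.hom_ext
      apply LinearMap.ext
      intro x
      show (ζ.app M) (r • x) = x
      rw [hsmul M (r • x), smul_smul, hcrA]
      exact hMblock x
  constructor
  · intro M _ _ hMblock _
    obtain ⟨g, h1, h2⟩ := key M hMblock
    exact ⟨g, h1, h2⟩
  · intro M _ hMblock
    obtain ⟨g, h1, _⟩ := key M hMblock
    exact ⟨adj₁.unit.app M, adj₂.counit.app M ≫ g, by
      rw [← Category.assoc]; exact h1⟩
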